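/- arXiv:2508.04537 — 2 statements merged into one kernel-verified Lean document; each statement's English description precedes it below -/
import Mathlib

section
/- Fix M ≥ 2 and 0 < α < 1, and let w be the Prelec weighting function with calibrated parameter β = (log M)^{1−α}. Then w overweights probabilities below the uniform value and underweights those above it: w(q) > q for all q ∈ (0, 1/M), and w(q) < q for all q ∈ (1/M, 1). -/
/-- Prelec weighting function with parameters `α, β`: `w(q) = exp(-β(-log q)^α)` for
`q ∈ (0,1]`, extended by `w(0) = 0`. -/
noncomputable def prelec (α β q : ℝ) : ℝ :=
  if q = 0 then 0 else Real.exp (-β * (-Real.log q) ^ α)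

/-- For `M ≥ 2` and `0 < α < 1`, the Prelec weighting function with calibrated
parameter `β = (log M)^(1-α)` overweights probabilities below `1/M` and underweights
those above it. -/
theorem prelec_overweight_below_uniform (M : ℕ) (hM : 2 ≤ M) (α : ℝ)
    (hα0 : 0 < α) (hα1 : α < 1) :
    (∀ q : ℝ, 0 < q → q < 1 / (M : ℝ) →
      prelec α (Real.log (M : ℝ) ^ ((1 : ℝ) - α)) q > q) ∧
    (∀ q : ℝ, 1 / (M : ℝ) < q → q < 1 →
      prelec α (Real.log (M : ℝ) ^ ((1 : ℝ) - α)) q < q) := by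
  have hM1 : (1:ℝ) < (M:ℝ) := by exact_mod_cast (by omega : 1 < M)
  have hlogM : 0 < Real.log M := Real.log_pos hM1
  constructor
  · intro q hq0 hq
    have hqne : q ≠ 0 := ne_of_gt hq0
    have hlogq : Real.log q < -Real.log M := by
      have := Real.log_lt_log hq0 hq
      rwa [one_div, Real.log_inv] at this
    set t := -Real.log q with ht
    have htM : Real.log M < t := by linarith
    have ht0 : 0 < t := lt_trans hlogM htM
    have key : Real.log M ^ ((1:ℝ)-α) * t ^ α < t := by
      have h1 : Real.log M ^ ((1:ℝ)-α) < t ^ ((1:ℝ)-α) :=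
        Real.rpow_lt_rpow hlogM.le htM (by linarith)
      calc Real.log M ^ ((1:ℝ)-α) * t ^ α < t ^ ((1:ℝ)-α) * t ^ α :=
            mul_lt_mul_of_pos_right h1 (Real.rpow_pos_of_pos ht0 α)
        _ = t := by rw [← Real.rpow_add ht0]; simp
    rw [prelec, if_neg hqne]
    calc q = Real.exp (Real.log q) := (Real.exp_log hq0).symm
      _ < _ := Real.exp_lt_exp.mpr (by rw [show (-Real.log q) = t from rfl]; linarith)
  · intro q hq hq1
    have hq0 : 0 < q := lt_trans (by positivity) hq
    have hqne : q ≠ 0 := ne_of_gt hq0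
    have hlogq : -Real.log M < Real.log q := by
      have := Real.log_lt_log (by positivity) hq
      rwa [one_div, Real.log_inv] at this
    set t := -Real.log q with ht
    have htM : t < Real.log M := by linarith
    have ht0 : 0 < t := by
      have := Real.log_neg hq0 hq1
      linarith
    have key : t < Real.log M ^ ((1:ℝ)-α) * t ^ α := by
      have h1 : t ^ ((1:ℝ)-α) < Real.log M ^ ((1:ℝ)-α) :=
        Real.rpow_lt_rpow ht0.le htM (by linarith)
      calc t = t ^ ((1:ℝ)-α) * t ^ α := by rw [← Real.rpow_add ht0]; simp
        _ < Real.log M ^ ((1:ℝ)-α) * t ^ α :=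
            mul_lt_mul_of_pos_right h1 (Real.rpow_pos_of_pos ht0 α)
    rw [prelec, if_neg hqne]
    calc Real.exp (-(Real.log M ^ ((1:ℝ)-α)) * (-Real.log q) ^ α)
        < Real.exp (Real.log q) := Real.exp_lt_exp.mpr (by
          rw [show (-Real.log q) = t from rfl]; linarith)
      _ = q := Real.exp_log hq0
end

section
/- Fix M ≥ 2 and α > 1, and let w be the Prelec weighting function with calibrated parameter β = (log M)^{1−α}. Then w underweights probabilities below the uniform value and overweights those above it: w(q) < q for all q ∈ (0, 1/M), and w(q) > q for all q ∈ (1/M, 1). -/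
lemma prelec_key (α L t : ℝ) (hL : 0 < L) (ht : 0 < t) :
    L ^ ((1:ℝ) - α) * t ^ α = t * (t / L) ^ (α - 1) := by
  rw [Real.div_rpow ht.le hL.le, show (1:ℝ) - α = -(α - 1) by ring,
    Real.rpow_neg hL.le]
  rw [show α = 1 + (α - 1) by ring, Real.rpow_add ht, Real.rpow_one]
  field_simp
  rw [show (1:ℝ) + (α - 1) - 1 = α - 1 by ring]

/-- For `M ≥ 2` and `α > 1`, the Prelec weighting function with calibrated parameter
`β = (log M)^(1-α)` underweights probabilities below `1/M` and overweights those
above it. -/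
theorem prelec_underweight_below_uniform (M : ℕ) (hM : 2 ≤ M) (α : ℝ)
    (hα : 1 < α) :
    (∀ q : ℝ, 0 < q → q < 1 / (M : ℝ) →
      prelec α (Real.log (M : ℝ) ^ ((1 : ℝ) - α)) q < q) ∧
    (∀ q : ℝ, 1 / (M : ℝ) < q → q < 1 →
      prelec α (Real.log (M : ℝ) ^ ((1 : ℝ) - α)) q > q) := by
  have hM1 : (1:ℝ) < (M:ℝ) := by exact_mod_cast Nat.lt_of_lt_of_le one_lt_two hM
  have hM0 : (0:ℝ) < (M:ℝ) := lt_trans one_pos hM1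
  have hL : 0 < Real.log (M:ℝ) := Real.log_pos hM1
  set L := Real.log (M:ℝ) with hLdef
  constructor
  · intro q hq hq'
    have hq1 : q < 1 := lt_of_lt_of_le hq' (by
      rw [div_le_one hM0]; exact_mod_cast Nat.one_le_of_lt (Nat.lt_of_lt_of_le one_lt_two hM))
    have ht : 0 < -Real.log q := by
      simpa using Real.log_neg hq hq1
    set t := -Real.log q with htdef
    have htL : L < t := by
      have : Real.log q < Real.log (1 / (M:ℝ)) := Real.log_lt_log hq hq'
      rw [Real.log_div one_ne_zero (ne_of_gt hM0), Real.log_one] at this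
      simp only [htdef, hLdef]; linarith
    have hkey := prelec_key α L t hL ht
    have hgt1 : (1:ℝ) < (t / L) ^ (α - 1) := by
      apply Real.one_lt_rpow_iff_of_pos (by positivity) |>.2
      exact Or.inl ⟨(one_lt_div hL).2 htL, by linarith⟩
    have : t < L ^ ((1:ℝ) - α) * t ^ α := by
      rw [hkey]; nlinarith
    have hq_exp : q = Real.exp (-t) := by
      rw [htdef, neg_neg, Real.exp_log hq]
    rw [prelec, if_neg (ne_of_gt hq), hq_exp]
    apply Real.exp_lt_exp.2
    simp only [Real.log_exp, neg_neg]
    linarith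
  · intro q hq' hq1
    have hq : 0 < q := lt_trans (by positivity) hq'
    have ht : 0 < -Real.log q := by simpa using Real.log_neg hq hq1
    set t := -Real.log q with htdef
    have htL : t < L := by
      have : Real.log (1 / (M:ℝ)) < Real.log q := Real.log_lt_log (by positivity) hq'
      rw [Real.log_div one_ne_zero (ne_of_gt hM0), Real.log_one] at this
      simp only [htdef, hLdef]; linarith
    have hkey := prelec_key α L t hL ht
    have hlt1 : (t / L) ^ (α - 1) < 1 := by
      apply Real.rpow_lt_one (by positivity) ((div_lt_one hL).2 htL) (by linarith)
    have : L ^ ((1:ℝ) - α) * t ^ α < t := by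
      rw [hkey]; nlinarith
    have hq_exp : q = Real.exp (-t) := by
      rw [htdef, neg_neg, Real.exp_log hq]
    rw [gt_iff_lt, prelec, if_neg (ne_of_gt hq), hq_exp]
    apply Real.exp_lt_exp.2
    simp only [Real.log_exp, neg_neg]
    linarith
end
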